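/- Semiskolemian subsets of (ℕ_{>0})^d are closed under finite union and finite intersection. -/

import Mathlib

/-- Componentwise `p`-adic valuation of a vector `w ∈ ℕ^d`. -/
def vp {d : ℕ} (p : ℕ) (w : Fin d → ℕ) : Fin d → ℕ := fun t => padicValNat p (w t)

/-- The skolemian set `Def(α₁, …; α)` determined by a family of exceptional
semilinear sets `αs` (indexed by `ι`) and a default set `α`: the set of vectors
`w ∈ (ℕ_{>0})^d` such that there are pairwise distinct primes `p i` with
`vp (p i) w ∈ αs i`, and `vp q w ∈ α` for every other prime `q` with
`vp q w ≠ 0`. -/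
def SkolemDef {d : ℕ} {ι : Type} (αs : ι → Set (Fin d → ℕ)) (α : Set (Fin d → ℕ)) :
    Set (Fin d → ℕ) :=
  {w | (∀ t, 0 < w t) ∧ ∃ p : ι → ℕ,
    (∀ i, (p i).Prime) ∧ Function.Injective p ∧
    (∀ i, vp (p i) w ∈ αs i) ∧
    ∀ q : ℕ, q.Prime → (∀ i, p i ≠ q) → vp q w ≠ 0 → vp q w ∈ α}

/-- A linear subset of `ℕ^d`: a base vector plus arbitrary `ℕ`-combinations of
finitely many period vectors. -/
def IsLinear {d : ℕ} (A : Set (Fin d → ℕ)) : Prop :=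
  ∃ (b : Fin d → ℕ) (k : ℕ) (per : Fin k → Fin d → ℕ),
    A = {v | ∃ c : Fin k → ℕ, v = b + ∑ j, c j • per j}

/-- A semilinear subset of `ℕ^d`: a finite union of linear sets. -/
def IsSemilinear {d : ℕ} (A : Set (Fin d → ℕ)) : Prop :=
  ∃ (m : ℕ) (L : Fin m → Set (Fin d → ℕ)), (∀ i, IsLinear (L i)) ∧ A = ⋃ i, L i

/-- A skolemian subset of `(ℕ_{>0})^d`. -/
def IsSkolemian {d : ℕ} (S : Set (Fin d → ℕ)) : Prop :=
  ∃ (n : ℕ) (αs : Fin n → Set (Fin d → ℕ)) (α : Set (Fin d → ℕ)),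
    (∀ i, IsSemilinear (αs i)) ∧ IsSemilinear α ∧ (0 : Fin d → ℕ) ∈ α ∧
    (∀ i, (0 : Fin d → ℕ) ∉ αs i) ∧ S = SkolemDef αs α

/-- A semiskolemian set: a finite union of skolemian sets. -/
def IsSemiskolemian {d : ℕ} (S : Set (Fin d → ℕ)) : Prop :=
  ∃ (m : ℕ) (T : Fin m → Set (Fin d → ℕ)), (∀ i, IsSkolemian (T i)) ∧ S = ⋃ i, T i

/-- `M` is a matching in the bipartite graph with edge set `E ⊆ L × R`:
a set of pairwise non-adjacent edges. -/
def IsBipMatching {L R : Type*} (E M : Set (L × R)) : Prop :=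
  M ⊆ E ∧ ∀ e ∈ M, ∀ f ∈ M, e ≠ f → e.1 ≠ f.1 ∧ e.2 ≠ f.2

/-- `M` covers every left vertex in `L'`. -/
def CoversL {L R : Type*} (M : Set (L × R)) (L' : Set L) : Prop :=
  ∀ l ∈ L', ∃ e ∈ M, e.1 = l

/-- `M` covers every right vertex in `R'`. -/
def CoversR {L R : Type*} (M : Set (L × R)) (R' : Set R) : Prop :=
  ∀ r ∈ R', ∃ e ∈ M, e.2 = r

section GD

private lemma piNatIsPWO {ι : Type} [Finite ι] (G : Set (ι → ℕ)) : G.IsPWO :=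
  Set.isPWO_of_wellQuasiOrderedLE G

variable {ι : Type} [Fintype ι]

private lemma pi_le_iff {a b : ι → ℕ} : a ≤ b ↔ ∃ c, a + c = b := by
  constructor
  · intro h
    exact ⟨b - a, funext fun i => by
      have hi : a i ≤ b i := h i
      show a i + (b i - a i) = b i
      omega⟩
  · rintro ⟨c, rfl⟩ i
    simp [Pi.add_apply]

private lemma pi_eq_of_le_of_sum_le {a b : ι → ℕ} (hab : a ≤ b)
    (hs : ∑ i, b i ≤ ∑ i, a i) : a = b := by
  obtain ⟨c, rfl⟩ := pi_le_iff.mp hab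
  have : ∑ i, (a + c) i = ∑ i, a i + ∑ i, c i := by
    simp [Pi.add_apply, Finset.sum_add_distrib]
  have hc : ∑ i, c i = 0 := by omega
  have : c = 0 := funext fun i =>
    Finset.sum_eq_zero_iff.mp hc i (Finset.mem_univ i)
  simp [this]

/-- Gordan: a "difference-closed" subset of `ℕ^ι` has a finite generating set. -/
private lemma gordan (H : Set (ι → ℕ))
    (hdiff : ∀ a ∈ H, ∀ b ∈ H, ∀ x, a + x = b → x ∈ H) :
    ∃ (r : ℕ) (g : Fin r → ι → ℕ), (∀ i, g i ∈ H) ∧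
      ∀ h ∈ H, ∃ n : Fin r → ℕ, h = ∑ i, n i • g i := by
  classical
  set G : Set (ι → ℕ) := {x | x ∈ H ∧ x ≠ 0 ∧ ∀ y ∈ H, y ≠ 0 → y ≤ x → y = x} with hGdef
  have hanti : IsAntichain (· ≤ ·) G := by
    intro a ha b hb hne hle
    exact hne (hb.2.2 a ha.1 ha.2.1 hle)
  have hfin : G.Finite := hanti.finite_of_partiallyWellOrderedOn (piNatIsPWO G)
  set s := hfin.toFinset with hs
  have hsG : ∀ x : s, (x : ι → ℕ) ∈ G := fun x => hfin.mem_toFinset.mp x.2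
  refine ⟨s.card, fun i => (s.equivFin.symm i : ι → ℕ), fun i => (hsG _).1, ?_⟩
  suffices main : ∀ N, ∀ h ∈ H, ∑ i, h i ≤ N →
      ∃ n : Fin s.card → ℕ, h = ∑ i, n i • (s.equivFin.symm i : ι → ℕ) by
    intro h hh; exact main _ h hh le_rfl
  intro N
  induction N with
  | zero =>
    intro h hh hle
    have : h = 0 := funext fun i =>
      Finset.sum_eq_zero_iff.mp (Nat.le_zero.mp hle) i (Finset.mem_univ i)
    exact ⟨0, by simp [this]⟩
  | succ N ih =>
    intro h hh hle
    by_cases h0 : h = 0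
    · exact ⟨0, by simp [h0]⟩
    · -- pick an element of S := {x ∈ H | x ≠ 0 ∧ x ≤ h} with minimal coordinate sum
      set S : Set (ι → ℕ) := {x | x ∈ H ∧ x ≠ 0 ∧ x ≤ h} with hSdef
      have hSne : ((fun x => ∑ i, x i) '' S).Nonempty := ⟨_, ⟨h, ⟨hh, h0, le_rfl⟩, rfl⟩⟩
      obtain ⟨x₀, hx₀S, hx₀sum⟩ := Nat.sInf_mem hSne
      have hmin : ∀ y ∈ S, ∑ i, x₀ i ≤ ∑ i, y i := by
        intro y hy
        exact le_trans (le_of_eq hx₀sum) (Nat.sInf_le ⟨y, hy, rfl⟩)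
      have hx₀G : x₀ ∈ G := by
        refine ⟨hx₀S.1, hx₀S.2.1, fun y hy hy0 hyx => ?_⟩
        have hyS : y ∈ S := ⟨hy, hy0, le_trans hyx hx₀S.2.2⟩
        have : ∑ i, y i ≤ ∑ i, x₀ i := Finset.sum_le_sum fun i _ => hyx i
        exact pi_eq_of_le_of_sum_le hyx (hmin y hyS)
      obtain ⟨x, hx⟩ := pi_le_iff.mp hx₀S.2.2
      have hxH : x ∈ H := hdiff x₀ hx₀S.1 h hh x hx
      have hsums : ∑ i, x₀ i + ∑ i, x i = ∑ i, h i := by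
        rw [← hx]; simp [Pi.add_apply, Finset.sum_add_distrib]
      have hx₀pos : 0 < ∑ i, x₀ i := by
        rcases Nat.eq_zero_or_pos (∑ i, x₀ i) with h' | h'
        · exact absurd (funext fun i =>
            Finset.sum_eq_zero_iff.mp h' i (Finset.mem_univ i)) hx₀S.2.1
        · exact h'
      have hxle : ∑ i, x i ≤ N := by clear hx₀sum hSne hmin; omega
      obtain ⟨n, hn⟩ := ih x hxH hxle
      set i₀ : Fin s.card := s.equivFin ⟨x₀, hfin.mem_toFinset.mpr hx₀G⟩ with hi₀
      refine ⟨fun i => if i = i₀ then n i + 1 else n i, ?_⟩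
      have hgi₀ : (s.equivFin.symm i₀ : ι → ℕ) = x₀ := by
        rw [hi₀, Equiv.symm_apply_apply]
      have : ∑ i, (if i = i₀ then n i + 1 else n i) • (s.equivFin.symm i : ι → ℕ)
          = ∑ i, (n i • (s.equivFin.symm i : ι → ℕ)
            + if i = i₀ then (s.equivFin.symm i : ι → ℕ) else 0) := by
        refine Finset.sum_congr rfl fun i _ => ?_
        by_cases hi : i = i₀ <;> simp [hi, add_smul]
      have hsplit : ∑ i, (if i = i₀ then (s.equivFin.symm i : ι → ℕ) else 0) = x₀ := by
        simp [Finset.sum_ite_eq', hgi₀]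
      rw [this, Finset.sum_add_distrib, hsplit, ← hn, ← hx]
      exact add_comm x₀ x

/-- Dickson-type decomposition of an `H`-stable set into finitely many translates. -/
private lemma dickson (E H : Set (ι → ℕ))
    (hdiff : ∀ a ∈ E, ∀ b ∈ E, ∀ x, a + x = b → x ∈ H) :
    ∃ t : Finset (ι → ℕ), (↑t : Set (ι → ℕ)) ⊆ E ∧
      ∀ e ∈ E, ∃ m ∈ t, ∃ h ∈ H, e = m + h := by
  classical
  set M : Set (ι → ℕ) := {x | x ∈ E ∧ ∀ y ∈ E, y ≤ x → y = x} with hMdef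
  have hanti : IsAntichain (· ≤ ·) M := by
    intro a ha b hb hne hle
    exact hne (hb.2 a ha.1 hle)
  have hfin : M.Finite := hanti.finite_of_partiallyWellOrderedOn (piNatIsPWO M)
  refine ⟨hfin.toFinset, fun x hx => (hfin.mem_toFinset.mp hx).1, fun e he => ?_⟩
  set S : Set (ι → ℕ) := {x | x ∈ E ∧ x ≤ e} with hSdef
  have hSne : ((fun x => ∑ i, x i) '' S).Nonempty := ⟨_, ⟨e, ⟨he, le_rfl⟩, rfl⟩⟩
  obtain ⟨m, hmS, hmsum⟩ := Nat.sInf_mem hSne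
  have hmin : ∀ y ∈ S, ∑ i, m i ≤ ∑ i, y i := by
    intro y hy
    exact le_trans (le_of_eq hmsum) (Nat.sInf_le ⟨y, hy, rfl⟩)
  have hmM : m ∈ M := by
    refine ⟨hmS.1, fun y hy hym => ?_⟩
    exact pi_eq_of_le_of_sum_le hym (hmin y ⟨hy, le_trans hym hmS.2⟩)
  obtain ⟨x, hx⟩ := pi_le_iff.mp hmS.2
  exact ⟨m, hfin.mem_toFinset.mpr hmM, x, hdiff m hmS.1 e he x hx, hx.symm⟩

end GD

section SL
variable {d : ℕ}

private lemma iUnion_eq_fin {β : Type} {κ : Type} [Fintype κ] (g : κ → Set β) :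
    ⋃ i, g i = ⋃ j : Fin (Fintype.card κ), g ((Fintype.equivFin κ).symm j) := by
  ext x
  simp only [Set.mem_iUnion]
  exact ⟨fun ⟨i, h⟩ => ⟨Fintype.equivFin κ i, by simpa using h⟩, fun ⟨j, h⟩ => ⟨_, h⟩⟩

private lemma isSemilinear_iUnion {κ : Type} [Fintype κ] (L : κ → Set (Fin d → ℕ))
    (h : ∀ i, IsSemilinear (L i)) : IsSemilinear (⋃ i, L i) := by
  choose m f hf hLf using h
  have h1 : (⋃ i, L i) = ⋃ x : Σ i : κ, Fin (m i), f x.1 x.2 := by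
    ext v
    simp only [Set.mem_iUnion, Sigma.exists]
    constructor
    · rintro ⟨i, hi⟩
      rw [hLf i] at hi
      obtain ⟨j, hj⟩ := Set.mem_iUnion.mp hi
      exact ⟨i, j, hj⟩
    · rintro ⟨i, j, hj⟩
      exact ⟨i, by rw [hLf i]; exact Set.mem_iUnion.mpr ⟨j, hj⟩⟩
  rw [h1, iUnion_eq_fin]
  exact ⟨_, _, fun j => hf _ _, rfl⟩

private lemma IsLinear.isSemilinear {A : Set (Fin d → ℕ)} (h : IsLinear A) :
    IsSemilinear A :=
  ⟨1, fun _ => A, fun _ => h, (Set.iUnion_const A).symm⟩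

private lemma isSemilinear_inter_linear {A B : Set (Fin d → ℕ)}
    (hA : IsLinear A) (hB : IsLinear B) : IsSemilinear (A ∩ B) := by
  classical
  obtain ⟨b, k, per, rfl⟩ := hA
  obtain ⟨b', k', per', rfl⟩ := hB
  set Φ : ((Fin k ⊕ Fin k') → ℕ) → (Fin d → ℕ) :=
    fun e => ∑ j, e (Sum.inl j) • per j with hΦ
  set Φ' : ((Fin k ⊕ Fin k') → ℕ) → (Fin d → ℕ) :=
    fun e => ∑ j, e (Sum.inr j) • per' j with hΦ'
  have hΦadd : ∀ x y, Φ (x + y) = Φ x + Φ y := by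
    intro x y
    funext t
    simp only [hΦ, Finset.sum_apply, Pi.smul_apply, smul_eq_mul, Pi.add_apply, add_mul,
      Finset.sum_add_distrib]
  have hΦ'add : ∀ x y, Φ' (x + y) = Φ' x + Φ' y := by
    intro x y
    funext t
    simp only [hΦ', Finset.sum_apply, Pi.smul_apply, smul_eq_mul, Pi.add_apply, add_mul,
      Finset.sum_add_distrib]
  have key : ∀ (r : ℕ) (n : Fin r → ℕ) (g : Fin r → (Fin k ⊕ Fin k') → ℕ),
      Φ (∑ i, n i • g i) = ∑ i, n i • Φ (g i) := by
    intro r n g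
    funext t
    simp only [hΦ, Finset.sum_apply, Pi.smul_apply, smul_eq_mul, Finset.sum_mul,
      Finset.mul_sum]
    rw [Finset.sum_comm]
    refine Finset.sum_congr rfl fun i _ => Finset.sum_congr rfl fun j _ => by ring
  have key' : ∀ (r : ℕ) (n : Fin r → ℕ) (g : Fin r → (Fin k ⊕ Fin k') → ℕ),
      Φ' (∑ i, n i • g i) = ∑ i, n i • Φ' (g i) := by
    intro r n g
    funext t
    simp only [hΦ', Finset.sum_apply, Pi.smul_apply, smul_eq_mul, Finset.sum_mul,
      Finset.mul_sum]
    rw [Finset.sum_comm]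
    refine Finset.sum_congr rfl fun i _ => Finset.sum_congr rfl fun j _ => by ring
  set E : Set ((Fin k ⊕ Fin k') → ℕ) := {e | b + Φ e = b' + Φ' e} with hE
  set H : Set ((Fin k ⊕ Fin k') → ℕ) := {e | Φ e = Φ' e} with hH
  have hdiffE : ∀ u ∈ E, ∀ v ∈ E, ∀ x, u + x = v → x ∈ H := by
    intro u hu v hv x hx
    have hu' : b + Φ u = b' + Φ' u := hu
    have hv' : b + Φ v = b' + Φ' v := hv
    rw [← hx, hΦadd, hΦ'add, ← add_assoc, ← add_assoc, hu'] at hv'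
    exact add_left_cancel hv'
  have hdiffH : ∀ u ∈ H, ∀ v ∈ H, ∀ x, u + x = v → x ∈ H := by
    intro u hu v hv x hx
    have hu' : Φ u = Φ' u := hu
    have hv' : Φ v = Φ' v := hv
    rw [← hx, hΦadd, hΦ'add, hu'] at hv'
    exact add_left_cancel hv'
  obtain ⟨r, g, hgH, hrep⟩ := gordan H hdiffH
  obtain ⟨t, htE, hdec⟩ := dickson E H hdiffE
  have hmain : ({v | ∃ c : Fin k → ℕ, v = b + ∑ j, c j • per j} ∩
      {v | ∃ c : Fin k' → ℕ, v = b' + ∑ j, c j • per' j}) =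
      ⋃ m : ↥t, {v | ∃ n : Fin r → ℕ, v = (b + Φ (m : (Fin k ⊕ Fin k') → ℕ)) + ∑ i, n i • Φ (g i)} := by
    ext v
    simp only [Set.mem_inter_iff, Set.mem_iUnion, Set.mem_setOf_eq]
    constructor
    · rintro ⟨⟨c, rfl⟩, ⟨c', hc'⟩⟩
      set e : (Fin k ⊕ Fin k') → ℕ := Sum.elim c c' with he
      have heE : e ∈ E := by
        have h1 : Φ e = ∑ j, c j • per j := rfl
        have h2 : Φ' e = ∑ j, c' j • per' j := rfl
        show b + Φ e = b' + Φ' e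
        rw [h1, h2, ← hc']
      obtain ⟨m, hmt, h, hhH, hdecomp⟩ := hdec e heE
      obtain ⟨n, hn⟩ := hrep h hhH
      refine ⟨⟨m, hmt⟩, n, ?_⟩
      have : Φ e = Φ m + Φ h := by rw [hdecomp, hΦadd]
      calc b + ∑ j, c j • per j = b + Φ e := rfl
        _ = b + Φ m + ∑ i, n i • Φ (g i) := by
            rw [this, hn, key, ← add_assoc]
    · rintro ⟨⟨m, hmt⟩, n, rfl⟩
      have hmE : m ∈ E := htE hmt
      set h : (Fin k ⊕ Fin k') → ℕ := ∑ i, n i • g i with hh2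
      have hΦh : Φ h = ∑ i, n i • Φ (g i) := key r n g
      have hΦ'h : Φ' h = ∑ i, n i • Φ' (g i) := key' r n g
      have hΦΦ' : Φ h = Φ' h := by
        rw [hΦh, hΦ'h]
        exact Finset.sum_congr rfl fun i _ => by rw [hgH i]
      set e := m + h with he2
      have heE : e ∈ E := by
        show b + Φ e = b' + Φ' e
        rw [he2, hΦadd, hΦ'add, ← add_assoc, ← add_assoc]
        have : b + Φ m = b' + Φ' m := hmE
        rw [this, hΦΦ']
      constructor
      · refine ⟨fun j => e (Sum.inl j), ?_⟩
        have : Φ e = ∑ j, e (Sum.inl j) • per j := rfl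
        rw [← this, he2, hΦadd, hΦh, ← add_assoc]
      · refine ⟨fun j => e (Sum.inr j), ?_⟩
        have h2 : Φ' e = ∑ j, e (Sum.inr j) • per' j := rfl
        have h3 : b + Φ m + ∑ i, n i • Φ (g i) = b + Φ e := by
          rw [he2, hΦadd, hΦh, ← add_assoc]
        rw [h3, heE, h2]
  rw [hmain]
  apply isSemilinear_iUnion
  intro m
  exact IsLinear.isSemilinear ⟨b + Φ (m : (Fin k ⊕ Fin k') → ℕ), r, fun i => Φ (g i), rfl⟩

private lemma IsSemilinear.inter {A B : Set (Fin d → ℕ)}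
    (hA : IsSemilinear A) (hB : IsSemilinear B) : IsSemilinear (A ∩ B) := by
  obtain ⟨a, L, hL, rfl⟩ := hA
  obtain ⟨c, L', hL', rfl⟩ := hB
  have : (⋃ i, L i) ∩ ⋃ j, L' j = ⋃ p : Fin a × Fin c, L p.1 ∩ L' p.2 := by
    ext x
    simp only [Set.mem_inter_iff, Set.mem_iUnion, Prod.exists]
    tauto
  rw [this]
  exact isSemilinear_iUnion _ fun p => isSemilinear_inter_linear (hL p.1) (hL' p.2)

end SL

private lemma IsSkolemian.isSemiskolemian {d : ℕ} {S : Set (Fin d → ℕ)} (h : IsSkolemian S) :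
    IsSemiskolemian S :=
  ⟨1, fun _ => S, fun _ => h, (Set.iUnion_const S).symm⟩

private lemma isSemiskolemian_iUnion {d : ℕ} {κ : Type} [Fintype κ]
    (Ts : κ → Set (Fin d → ℕ)) (h : ∀ i, IsSemiskolemian (Ts i)) :
    IsSemiskolemian (⋃ i, Ts i) := by
  choose m f hf hTf using h
  have h1 : (⋃ i, Ts i) = ⋃ x : Σ i : κ, Fin (m i), f x.1 x.2 := by
    ext v
    simp only [Set.mem_iUnion, Sigma.exists]
    constructor
    · rintro ⟨i, hi⟩
      rw [hTf i] at hi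
      obtain ⟨j, hj⟩ := Set.mem_iUnion.mp hi
      exact ⟨i, j, hj⟩
    · rintro ⟨i, j, hj⟩
      exact ⟨i, by rw [hTf i]; exact Set.mem_iUnion.mpr ⟨j, hj⟩⟩
  rw [h1, iUnion_eq_fin]
  exact ⟨_, _, fun j => hf _ _, rfl⟩

section SK
variable {d : ℕ}

variable {d : ℕ}

/-- Reindexing a `SkolemDef` along an equivalence. -/
private lemma skolemDef_reindex {ι ι' : Type} (e : ι' ≃ ι)
    (αs : ι → Set (Fin d → ℕ)) (α : Set (Fin d → ℕ)) :
    SkolemDef (fun i' => αs (e i')) α = SkolemDef αs α := by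
  ext w
  constructor
  · rintro ⟨hw, p, hp, hpinj, hpm, hpd⟩
    refine ⟨hw, p ∘ e.symm, fun i => hp _, hpinj.comp e.symm.injective, fun i => ?_, ?_⟩
    · have := hpm (e.symm i)
      simpa using this
    · intro q hq hne h0
      exact hpd q hq (fun i' => by simpa using hne (e i')) h0
  · rintro ⟨hw, p, hp, hpinj, hpm, hpd⟩
    refine ⟨hw, p ∘ e, fun i => hp _, hpinj.comp e.injective, fun i => hpm (e i), ?_⟩
    intro q hq hne h0
    refine hpd q hq (fun i => ?_) h0
    have := hne (e.symm i)
    simpa using this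

private lemma isSkolemian_skolemDef {ι : Type} [Fintype ι]
    (αs : ι → Set (Fin d → ℕ)) (α : Set (Fin d → ℕ))
    (h1 : ∀ i, IsSemilinear (αs i)) (h2 : IsSemilinear α)
    (h3 : (0 : Fin d → ℕ) ∈ α) (h4 : ∀ i, (0 : Fin d → ℕ) ∉ αs i) :
    IsSkolemian (SkolemDef αs α) :=
  ⟨Fintype.card ι, fun j => αs ((Fintype.equivFin ι).symm j), α,
    fun j => h1 _, h2, h3, fun j => h4 _,
    (skolemDef_reindex (Fintype.equivFin ι).symm αs α).symm⟩

/-- The intersection of two skolemian sets is semiskolemian. -/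
private lemma isSemiskolemian_inter_skolemian {S T : Set (Fin d → ℕ)}
    (hS : IsSkolemian S) (hT : IsSkolemian T) : IsSemiskolemian (S ∩ T) := by
  classical
  obtain ⟨n, αs, α₀, hαs, hα₀, h0α, h0αs, rfl⟩ := hS
  obtain ⟨m, βs, β₀, hβs, hβ₀, h0β, h0βs, rfl⟩ := hT
  set Sig := {σ : Fin n → Option (Fin m) //
    ∀ i i' j, σ i = some j → σ i' = some j → i = i'} with hSig
  haveI : Fintype Sig := Fintype.ofFinite _
  let Idx : Sig → Type := fun σ => Fin n ⊕ {j : Fin m // ∀ i, σ.1 i ≠ some j}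
  haveI : ∀ σ : Sig, Fintype (Idx σ) := fun σ => Fintype.ofFinite _
  let γ : ∀ σ : Sig, Idx σ → Set (Fin d → ℕ) := fun σ x =>
    Sum.elim (fun i => αs i ∩ Option.elim (σ.1 i) β₀ (fun j => βs j))
      (fun j => α₀ ∩ βs j.1) x
  have main : SkolemDef αs α₀ ∩ SkolemDef βs β₀ =
      ⋃ σ : Sig, SkolemDef (γ σ) (α₀ ∩ β₀) := by
    ext w
    simp only [Set.mem_inter_iff, Set.mem_iUnion]
    constructor
    · rintro ⟨⟨hw, p, hp, hpinj, hpm, hpd⟩, ⟨-, q, hq, hqinj, hqm, hqd⟩⟩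
      set σf : Fin n → Option (Fin m) :=
        fun i => if h : ∃ j, q j = p i then some h.choose else none with hσfdef
      have hσf : ∀ i j, σf i = some j → q j = p i := by
        intro i j hij
        by_cases h : ∃ j, q j = p i
        · rw [hσfdef] at hij
          simp only [dif_pos h] at hij
          rw [← Option.some.inj hij]
          exact h.choose_spec
        · rw [hσfdef] at hij
          simp [dif_neg h] at hij
      have hσf2 : ∀ i j, q j = p i → σf i = some j := by
        intro i j hji
        have h : ∃ j, q j = p i := ⟨j, hji⟩
        have : h.choose = j := hqinj (h.choose_spec.trans hji.symm)
        rw [hσfdef]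
        simp only [dif_pos h, this]
      have hσf' : ∀ i, σf i = none → ∀ j, q j ≠ p i := by
        intro i hi j hji
        have := hσf2 i j hji
        rw [this] at hi
        exact Option.some_ne_none j hi
      set σ : Sig := ⟨σf, fun i i' j h h' =>
        hpinj ((hσf i j h).symm.trans (hσf i' j h'))⟩ with hσdef
      refine ⟨σ, hw, Sum.elim p (fun j => q j.1), ?_, ?_, ?_, ?_⟩
      · rintro (i | j)
        · exact hp i
        · exact hq j.1
      · rintro (i | j) (i' | j') hxy
        · rw [hpinj hxy]
        · exact absurd (hσf2 i j'.1 hxy.symm) (j'.2 i)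
        · exact absurd (hσf2 i' j.1 hxy) (j.2 i')
        · simp only [Sum.elim_inr] at hxy
          have := hqinj hxy
          rw [Subtype.ext this]
      · rintro (i | j)
        · have hmem2 : ∀ o, σf i = o → vp (p i) w ∈ Option.elim o β₀ (fun j => βs j) := by
            rintro (- | j) hoi
            · have hne : vp (p i) w ≠ 0 := fun h => h0αs i (h ▸ hpm i)
              exact hqd (p i) (hp i) (fun j => hσf' i hoi j) hne
            · have := hqm j
              rw [hσf i j hoi] at this
              exact this
          exact ⟨hpm i, hmem2 (σf i) rfl⟩
        · refine ⟨?_, hqm j.1⟩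
          have hne : vp (q j.1) w ≠ 0 := fun h => h0βs j.1 (h ▸ hqm j.1)
          refine hpd (q j.1) (hq j.1) (fun i hi => ?_) hne
          exact j.2 i (hσf2 i j.1 hi.symm)
      · intro r hr hner h0r
        refine ⟨hpd r hr (fun i => hner (Sum.inl i)) h0r, ?_⟩
        refine hqd r hr (fun j => ?_) h0r
        by_cases hj : ∀ i, σf i ≠ some j
        · exact hner (Sum.inr ⟨j, hj⟩)
        · push_neg at hj
          obtain ⟨i, hi⟩ := hj
          rw [hσf i j hi]
          exact hner (Sum.inl i)
    · rintro ⟨σ, hw, P, hP, hPinj, hPm, hPd⟩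
      constructor
      · refine ⟨hw, fun i => P (Sum.inl i), fun i => hP _,
          fun a b hab => Sum.inl_injective (hPinj hab), fun i => (hPm (Sum.inl i)).1, ?_⟩
        intro r hr hner h0r
        by_cases hex : ∃ j : {j : Fin m // ∀ i, σ.1 i ≠ some j}, P (Sum.inr j) = r
        · obtain ⟨j, hj⟩ := hex
          have := (hPm (Sum.inr j)).1
          rw [hj] at this
          exact this
        · push_neg at hex
          refine (hPd r hr (fun x => ?_) h0r).1
          rcases x with i | j
          · exact hner i
          · exact hex j
      · set q : Fin m → ℕ := fun j =>
          if h : ∃ i, σ.1 i = some j then P (Sum.inl h.choose)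
          else P (Sum.inr ⟨j, fun i hi => h ⟨i, hi⟩⟩) with hqdef
        have hq1 : ∀ j (h : ∃ i, σ.1 i = some j), q j = P (Sum.inl h.choose) := by
          intro j h
          rw [hqdef]
          simp only [dif_pos h]
        have hq2 : ∀ j (h : ¬ ∃ i, σ.1 i = some j),
            q j = P (Sum.inr ⟨j, fun i hi => h ⟨i, hi⟩⟩) := by
          intro j h
          rw [hqdef]
          simp only [dif_neg h]
        have hq1' : ∀ i j, σ.1 i = some j → q j = P (Sum.inl i) := by
          intro i j hij
          have h : ∃ i, σ.1 i = some j := ⟨i, hij⟩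
          rw [hq1 j h, σ.2 h.choose i j h.choose_spec hij]
        refine ⟨hw, q, ?_, ?_, ?_, ?_⟩
        · intro j
          by_cases h : ∃ i, σ.1 i = some j
          · rw [hq1 j h]; exact hP _
          · rw [hq2 j h]; exact hP _
        · intro j j' hjj'
          by_cases h : ∃ i, σ.1 i = some j <;> by_cases h' : ∃ i, σ.1 i = some j'
          · rw [hq1 j h, hq1 j' h'] at hjj'
            have := Sum.inl_injective (hPinj hjj')
            have h2 := h.choose_spec
            rw [this, h'.choose_spec] at h2
            exact (Option.some.inj h2).symm
          · rw [hq1 j h, hq2 j' h'] at hjj'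
            exact absurd (hPinj hjj') (by simp)
          · rw [hq2 j h, hq1 j' h'] at hjj'
            exact absurd (hPinj hjj') (by simp)
          · rw [hq2 j h, hq2 j' h'] at hjj'
            have := Sum.inr_injective (hPinj hjj')
            exact congrArg Subtype.val this
        · intro j
          by_cases h : ∃ i, σ.1 i = some j
          · rw [hq1 j h]
            have := (hPm (Sum.inl h.choose)).2
            rw [h.choose_spec] at this
            exact this
          · rw [hq2 j h]
            exact (hPm (Sum.inr ⟨j, fun i hi => h ⟨i, hi⟩⟩)).2
        · intro r hr hner h0r
          by_cases hex : ∃ x, P x = r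
          · obtain ⟨x, hx⟩ := hex
            rcases x with i | j
            · rcases hoi : σ.1 i with - | j
              · have := (hPm (Sum.inl i)).2
                rw [hoi] at this
                simp only [Option.elim] at this
                rw [hx] at this
                exact this
              · exact absurd (by rw [hq1' i j hoi, hx]) (hner j)
            · have hnotex : ¬ ∃ i, σ.1 i = some j.1 := fun h' => j.2 h'.choose h'.choose_spec
              have hqj : q j.1 = P (Sum.inr ⟨j.1, fun i hi => hnotex ⟨i, hi⟩⟩) := hq2 j.1 hnotex
              have heq : (⟨j.1, fun i hi => hnotex ⟨i, hi⟩⟩ :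
                  {j' : Fin m // ∀ i, σ.1 i ≠ some j'}) = j := Subtype.ext rfl
              rw [heq] at hqj
              exact absurd (hqj.trans hx) (hner j.1)
          · push_neg at hex
            exact (hPd r hr (fun x => hex x) h0r).2
  rw [main]
  apply isSemiskolemian_iUnion
  intro σ
  apply IsSkolemian.isSemiskolemian
  apply isSkolemian_skolemDef
  · rintro (i | j)
    · show IsSemilinear (αs i ∩ Option.elim (σ.1 i) β₀ (fun j => βs j))
      rcases hoi : σ.1 i with - | j
      · exact (hαs i).inter hβ₀
      · exact (hαs i).inter (hβs j)
    · exact hα₀.inter (hβs j.1)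
  · exact hα₀.inter hβ₀
  · exact ⟨h0α, h0β⟩
  · rintro (i | j)
    · exact fun h => h0αs i h.1
    · exact fun h => h0βs j.1 h.2

end SK

/-- Semiskolemian subsets of `(ℕ_{>0})^d` are closed under (finite) union and
(finite) intersection. -/
theorem semiskolemian_union_inter {d : ℕ} (S T : Set (Fin d → ℕ))
    (hS : IsSemiskolemian S) (hT : IsSemiskolemian T) :
    IsSemiskolemian (S ∪ T) ∧ IsSemiskolemian (S ∩ T) := by
  obtain ⟨a, T1, h1, rfl⟩ := hS
  obtain ⟨c, T2, h2, rfl⟩ := hT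
  constructor
  · have hU : ((⋃ i, T1 i) ∪ ⋃ j, T2 j) = ⋃ x : Fin a ⊕ Fin c, Sum.elim T1 T2 x := by
      ext v
      simp only [Set.mem_union, Set.mem_iUnion, Sum.exists, Sum.elim_inl, Sum.elim_inr]
    rw [hU]
    exact isSemiskolemian_iUnion _ fun x => by
      rcases x with i | j
      · exact IsSkolemian.isSemiskolemian (h1 i)
      · exact IsSkolemian.isSemiskolemian (h2 j)
  · have hI : ((⋃ i, T1 i) ∩ ⋃ j, T2 j) = ⋃ p : Fin a × Fin c, T1 p.1 ∩ T2 p.2 := by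
      ext v
      simp only [Set.mem_inter_iff, Set.mem_iUnion, Prod.exists]
      tauto
    rw [hI]
    exact isSemiskolemian_iUnion _ fun p => isSemiskolemian_inter_skolemian (h1 p.1) (h2 p.2)
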